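/- Let λ > 0 with θ_λ ∈ (0, π/2) defined by tan θ_λ = 1/λ, let m ∈ (0, θ_λ], let μ_L : (0, m] → ℝ be continuous, let μ_D : [0, m] → [0, ∞) be continuous, let (ψ, a_c) be a correction pair, let τ : (0, m] → [0, 1) be the map sending φ to the unique a ∈ [0, 1) satisfying E(φ, a), and define μ_G^c(φ) := μ_G(φ) + (cos θ_λ · sin² φ / cos(θ_λ − φ)) · ψ((τ(φ) − a_c)_+)/(1 − τ(φ))². Assume μ_G^c(m) ≤ μ_L(m) − tan(θ_λ − m) μ_D(m). If φ₀ ∈ (0, m] satisfies the uncorrected equation μ_L(φ₀) − tan(θ_λ − φ₀) μ_D(φ₀) = μ_G(φ₀), then there exists φ ∈ [φ₀, m] satisfying the corrected equation μ_L(φ) − tan(θ_λ − φ) μ_D(φ) = μ_G^c(φ). -/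

import Mathlib

open Real Set

/-- The function `g(φ) = cot φ · tan(θ − φ) + (μ_D(φ)/sin φ)(1 + cot φ · tan(θ − φ))`. -/
noncomputable def gBEM (θ : ℝ) (μD : ℝ → ℝ) (φ : ℝ) : ℝ :=
  (Real.cos φ / Real.sin φ) * Real.tan (θ - φ) +
    (μD φ / Real.sin φ) * (1 + (Real.cos φ / Real.sin φ) * Real.tan (θ - φ))

/-- The implicit equation `E(φ, a)`:
`a/(1−a) + (sin θ · sin φ / cos(θ−φ)) · ψ((a−a_c)_+)/(1−a)² = g(φ)`. -/
def EBEM (θ : ℝ) (μD ψ : ℝ → ℝ) (ac φ a : ℝ) : Prop :=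
  a / (1 - a) +
      (Real.sin θ * Real.sin φ / Real.cos (θ - φ)) * ψ (max (a - ac) 0) / (1 - a) ^ 2
    = gBEM θ μD φ

/-- The corrected macroscopic function
`μ_G^c(φ) = μ_G(φ) + (cos θ · sin²φ / cos(θ−φ)) · ψ((τ(φ)−a_c)_+)/(1−τ(φ))²`. -/
noncomputable def muGc (θ : ℝ) (ψ : ℝ → ℝ) (ac : ℝ) (τ : ℝ → ℝ) (φ : ℝ) : ℝ :=
  Real.sin φ * Real.tan (θ - φ) +
    (Real.cos θ * Real.sin φ ^ 2 / Real.cos (θ - φ)) * ψ (max (τ φ - ac) 0) / (1 - τ φ) ^ 2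

/-- Monotonicity (in `a`) of the left-hand side of the implicit equation. -/
lemma LBEM_mono {c ac : ℝ} (hc : 0 ≤ c) {ψ : ℝ → ℝ}
    (hψmono : MonotoneOn ψ (Ici 0)) (hψnn : ∀ x ∈ Ici (0 : ℝ), 0 ≤ ψ x)
    {a b : ℝ} (ha : 0 ≤ a) (hab : a ≤ b) (hb : b < 1) :
    a / (1 - a) + c * ψ (max (a - ac) 0) / (1 - a) ^ 2 ≤
      b / (1 - b) + c * ψ (max (b - ac) 0) / (1 - b) ^ 2 := by
  have h1a : 0 < 1 - a := by linarith
  have h1b : 0 < 1 - b := by linarith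
  have hfirst : a / (1 - a) ≤ b / (1 - b) := by
    rw [div_le_div_iff₀ h1a h1b]; nlinarith
  have hψle : ψ (max (a - ac) 0) ≤ ψ (max (b - ac) 0) :=
    hψmono (mem_Ici.mpr (le_max_right _ _)) (mem_Ici.mpr (le_max_right _ _)) (max_le_max (by linarith) le_rfl)
  have hψa : 0 ≤ ψ (max (a - ac) 0) := hψnn _ (mem_Ici.mpr (le_max_right _ _))
  have hsecond : c * ψ (max (a - ac) 0) / (1 - a) ^ 2 ≤
      c * ψ (max (b - ac) 0) / (1 - b) ^ 2 :=
    div_le_div₀ (mul_nonneg hc (hψnn _ (mem_Ici.mpr (le_max_right _ _))))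
      (mul_le_mul_of_nonneg_left hψle hc) (by positivity) (by nlinarith)
  linarith

/-- Strict monotonicity (in `a`) of the left-hand side of the implicit equation. -/
lemma LBEM_strictMono {c ac : ℝ} (hc : 0 ≤ c) {ψ : ℝ → ℝ}
    (hψmono : MonotoneOn ψ (Ici 0)) (hψnn : ∀ x ∈ Ici (0 : ℝ), 0 ≤ ψ x)
    {a b : ℝ} (ha : 0 ≤ a) (hab : a < b) (hb : b < 1) :
    a / (1 - a) + c * ψ (max (a - ac) 0) / (1 - a) ^ 2 <
      b / (1 - b) + c * ψ (max (b - ac) 0) / (1 - b) ^ 2 := by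
  have h1a : 0 < 1 - a := by linarith
  have h1b : 0 < 1 - b := by linarith
  have hfirst : a / (1 - a) < b / (1 - b) := by
    rw [div_lt_div_iff₀ h1a h1b]; nlinarith
  have hψle : ψ (max (a - ac) 0) ≤ ψ (max (b - ac) 0) :=
    hψmono (mem_Ici.mpr (le_max_right _ _)) (mem_Ici.mpr (le_max_right _ _)) (max_le_max (by linarith) le_rfl)
  have hψa : 0 ≤ ψ (max (a - ac) 0) := hψnn _ (mem_Ici.mpr (le_max_right _ _))
  have hsecond : c * ψ (max (a - ac) 0) / (1 - a) ^ 2 ≤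
      c * ψ (max (b - ac) 0) / (1 - b) ^ 2 :=
    div_le_div₀ (mul_nonneg hc (hψnn _ (mem_Ici.mpr (le_max_right _ _))))
      (mul_le_mul_of_nonneg_left hψle hc) (by positivity) (by nlinarith)
  linarith

/-- Bracketing: a solution `φ₀` of the uncorrected equation
`μ_L(φ₀) − tan(θ−φ₀)·μ_D(φ₀) = μ_G(φ₀)` yields a solution of the corrected equation
`μ_L(φ) − tan(θ−φ)·μ_D(φ) = μ_G^c(φ)` in `[φ₀, m]`, provided the boundary condition
`μ_G^c(m) ≤ μ_L(m) − tan(θ−m)·μ_D(m)` holds. -/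
theorem bem_corrected_bracketing
    (lam θ m : ℝ) (hlam : 0 < lam) (hθ : θ ∈ Ioo 0 (π / 2))
    (htan : Real.tan θ = 1 / lam) (hm : m ∈ Ioc 0 θ)
    (μL : ℝ → ℝ) (hμLc : ContinuousOn μL (Ioc 0 m))
    (μD : ℝ → ℝ) (hμDc : ContinuousOn μD (Icc 0 m))
    (hμDnn : ∀ φ ∈ Icc 0 m, 0 ≤ μD φ)
    (ac : ℝ) (hac : ac ∈ Ioo (0 : ℝ) 1)
    (ψ : ℝ → ℝ) (hψc : ContinuousOn ψ (Ici 0)) (hψmono : MonotoneOn ψ (Ici 0))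
    (hψ0 : ψ 0 = 0) (hψnn : ∀ x ∈ Ici (0 : ℝ), 0 ≤ ψ x)
    (τ : ℝ → ℝ)
    (hτ : ∀ φ ∈ Ioc 0 m, τ φ ∈ Ico (0 : ℝ) 1 ∧ EBEM θ μD ψ ac φ (τ φ))
    (hτuniq : ∀ φ ∈ Ioc 0 m, ∀ a ∈ Ico (0 : ℝ) 1, EBEM θ μD ψ ac φ a → a = τ φ)
    (hbdry : muGc θ ψ ac τ m ≤ μL m - Real.tan (θ - m) * μD m)
    (φ₀ : ℝ) (hφ₀ : φ₀ ∈ Ioc 0 m)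
    (h₀ : μL φ₀ - Real.tan (θ - φ₀) * μD φ₀ = Real.sin φ₀ * Real.tan (θ - φ₀)) :
    ∃ φ ∈ Icc φ₀ m,
      μL φ - Real.tan (θ - φ) * μD φ = muGc θ ψ ac τ φ := by
  obtain ⟨hθ0, hθ2⟩ := hθ
  obtain ⟨hm0, hmθ⟩ := hm
  obtain ⟨hφ₀0, hφ₀m⟩ := hφ₀
  have hsub : Icc φ₀ m ⊆ Ioc 0 m := fun x hx => ⟨lt_of_lt_of_le hφ₀0 hx.1, hx.2⟩
  have hsub' : Icc φ₀ m ⊆ Icc 0 m := fun x hx => ⟨le_of_lt (lt_of_lt_of_le hφ₀0 hx.1), hx.2⟩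
  -- basic trigonometric positivity facts
  have hsin : ∀ x ∈ Ioc 0 m, 0 < Real.sin x := by
    intro x hx
    exact Real.sin_pos_of_pos_of_lt_pi hx.1 (by
      have := Real.pi_gt_three
      calc x ≤ m := hx.2
        _ ≤ θ := hmθ
        _ < π / 2 := hθ2
        _ < π := by linarith)
  have hcosd : ∀ x ∈ Ioc 0 m, 0 < Real.cos (θ - x) := by
    intro x hx
    apply Real.cos_pos_of_mem_Ioo
    have h1 : 0 ≤ θ - x := by linarith [le_trans hx.2 hmθ]
    constructor
    · linarith [Real.pi_pos]
    · linarith [hx.1]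
  -- the coefficient c(φ) is positive on Ioc 0 m
  have hcpos : ∀ x ∈ Ioc 0 m, 0 < Real.sin θ * Real.sin x / Real.cos (θ - x) := by
    intro x hx
    have hsθ : 0 < Real.sin θ := Real.sin_pos_of_pos_of_lt_pi hθ0 (by linarith [Real.pi_pos])
    exact div_pos (mul_pos hsθ (hsin x hx)) (hcosd x hx)
  -- continuity of τ on Icc φ₀ m
  set L : ℝ → ℝ → ℝ := fun x a =>
    a / (1 - a) + (Real.sin θ * Real.sin x / Real.cos (θ - x)) * ψ (max (a - ac) 0) / (1 - a) ^ 2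
    with hL
  have hE_iff : ∀ x a, EBEM θ μD ψ ac x a ↔ L x a = gBEM θ μD x := by
    intro x a; rfl
  have hLcont : ∀ a : ℝ, ContinuousOn (fun x => L x a) (Icc φ₀ m) := by
    intro a
    apply ContinuousOn.add continuousOn_const
    apply ContinuousOn.div_const
    apply ContinuousOn.mul _ continuousOn_const
    apply ContinuousOn.div
    · exact (continuous_const.mul Real.continuous_sin).continuousOn
    · exact (Real.continuous_cos.comp (continuous_const.sub continuous_id)).continuousOn
    · intro x hx; exact ne_of_gt (hcosd x (hsub hx))
  have hgcont : ContinuousOn (gBEM θ μD) (Icc φ₀ m) := by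
    have htanc : ContinuousOn (fun x => Real.tan (θ - x)) (Icc φ₀ m) := by
      intro x hx
      exact (Real.continuousAt_tan.mpr (ne_of_gt (hcosd x (hsub hx)))).comp_continuousWithinAt
        ((continuous_const.sub continuous_id).continuousWithinAt)
    have hsinne : ∀ x ∈ Icc φ₀ m, Real.sin x ≠ 0 := fun x hx => ne_of_gt (hsin x (hsub hx))
    apply ContinuousOn.add
    · exact (ContinuousOn.div Real.continuous_cos.continuousOn
        Real.continuous_sin.continuousOn hsinne).mul htanc
    · apply ContinuousOn.mul
      · exact ContinuousOn.div (hμDc.mono hsub') Real.continuous_sin.continuousOn hsinne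
      · exact continuousOn_const.add ((ContinuousOn.div Real.continuous_cos.continuousOn
          Real.continuous_sin.continuousOn hsinne).mul htanc)
  have hτcont : ContinuousOn τ (Icc φ₀ m) := by
    intro φ₁ hφ₁
    rw [Metric.continuousWithinAt_iff]
    intro ε hε
    obtain ⟨hτ₁mem, hτ₁E⟩ := hτ φ₁ (hsub hφ₁)
    set t₁ := τ φ₁
    have ht₁0 : 0 ≤ t₁ := hτ₁mem.1
    have ht₁1 : t₁ < 1 := hτ₁mem.2
    set ε' : ℝ := min (ε / 2) ((1 - t₁) / 2) with hε'
    have hε'pos : 0 < ε' := lt_min (by linarith) (by linarith)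
    set aU : ℝ := t₁ + ε' with haU
    have haU1 : aU < 1 := by
      have : ε' ≤ (1 - t₁) / 2 := min_le_right _ _
      simp only [haU]; linarith
    -- upper comparison: L φ₁ aU > g φ₁
    have hU : gBEM θ μD φ₁ < L φ₁ aU := by
      have h1 : L φ₁ t₁ < L φ₁ aU := LBEM_strictMono (ac := ac) (le_of_lt (hcpos φ₁ (hsub hφ₁)))
        hψmono hψnn ht₁0 (by simp only [haU]; linarith) haU1
      have h2 : L φ₁ t₁ = gBEM θ μD φ₁ := (hE_iff φ₁ t₁).mp hτ₁E
      linarith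
    have hUε : ∀ᶠ x in nhdsWithin φ₁ (Icc φ₀ m), gBEM θ μD x < L x aU := by
      have hcg : ContinuousWithinAt (gBEM θ μD) (Icc φ₀ m) φ₁ := hgcont φ₁ hφ₁
      have hcL : ContinuousWithinAt (fun x => L x aU) (Icc φ₀ m) φ₁ := (hLcont aU) φ₁ hφ₁
      exact Filter.Tendsto.eventually_lt hcg hcL hU
    -- lower comparison
    have hLε : ∀ᶠ x in nhdsWithin φ₁ (Icc φ₀ m), t₁ - ε < τ x := by
      by_cases hcase : t₁ ≤ ε / 2
      · filter_upwards [self_mem_nhdsWithin] with x hx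
        have := (hτ x (hsub hx)).1.1
        linarith
      · push_neg at hcase
        set aL : ℝ := t₁ - ε / 2 with haL
        have haL0 : 0 ≤ aL := by simp only [haL]; linarith
        have hLo : L φ₁ aL < gBEM θ μD φ₁ := by
          have h1 : L φ₁ aL < L φ₁ t₁ := LBEM_strictMono (ac := ac)
            (le_of_lt (hcpos φ₁ (hsub hφ₁))) hψmono hψnn haL0
            (by simp only [haL]; linarith) ht₁1
          have h2 : L φ₁ t₁ = gBEM θ μD φ₁ := (hE_iff φ₁ t₁).mp hτ₁E
          linarith
        have hcg : ContinuousWithinAt (gBEM θ μD) (Icc φ₀ m) φ₁ := hgcont φ₁ hφ₁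
        have hcL : ContinuousWithinAt (fun x => L x aL) (Icc φ₀ m) φ₁ := (hLcont aL) φ₁ hφ₁
        have hev := Filter.Tendsto.eventually_lt hcL hcg hLo
        filter_upwards [hev, self_mem_nhdsWithin] with x hx hx'
        by_contra hcon
        push_neg at hcon
        -- τ x ≤ t₁ - ε < aL
        have hτx := hτ x (hsub hx')
        have h1 : L x (τ x) ≤ L x aL :=
          LBEM_mono (ac := ac) (le_of_lt (hcpos x (hsub hx'))) hψmono hψnn hτx.1.1
            (by simp only [haL]; linarith) (by simp only [haL]; linarith)
        have h2 : L x (τ x) = gBEM θ μD x := (hE_iff x (τ x)).mp hτx.2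
        linarith
    have hUε' : ∀ᶠ x in nhdsWithin φ₁ (Icc φ₀ m), τ x < t₁ + ε := by
      filter_upwards [hUε, self_mem_nhdsWithin] with x hx hx'
      by_contra hcon
      push_neg at hcon
      have hτx := hτ x (hsub hx')
      have haUε : aU ≤ τ x := by
        have : ε' ≤ ε / 2 := min_le_left _ _
        simp only [haU]; linarith
      have h1 : L x aU ≤ L x (τ x) :=
        LBEM_mono (ac := ac) (le_of_lt (hcpos x (hsub hx'))) hψmono hψnn
          (by simp only [haU]; positivity) haUε hτx.1.2
      have h2 : L x (τ x) = gBEM θ μD x := (hE_iff x (τ x)).mp hτx.2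
      linarith
    have hboth := hUε'.and hLε
    rw [Filter.Eventually, Metric.mem_nhdsWithin_iff] at hboth
    obtain ⟨δ, hδ, hball⟩ := hboth
    refine ⟨δ, hδ, fun x hx hxd => ?_⟩
    have := hball ⟨Metric.mem_ball.mpr hxd, hx⟩
    rw [Real.dist_eq, abs_sub_lt_iff]
    constructor <;> linarith [this.1, this.2]
  -- continuity of the full function F
  set F : ℝ → ℝ := fun x => μL x - Real.tan (θ - x) * μD x - muGc θ ψ ac τ x with hF
  have htanc : ContinuousOn (fun x => Real.tan (θ - x)) (Icc φ₀ m) := by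
    intro x hx
    exact (Real.continuousAt_tan.mpr (ne_of_gt (hcosd x (hsub hx)))).comp_continuousWithinAt
      ((continuous_const.sub continuous_id).continuousWithinAt)
  have hFcont : ContinuousOn F (Icc φ₀ m) := by
    apply ContinuousOn.sub
    · exact (hμLc.mono hsub).sub (htanc.mul (hμDc.mono hsub'))
    · unfold muGc
      apply ContinuousOn.add
      · exact Real.continuous_sin.continuousOn.mul htanc
      · apply ContinuousOn.div
        · apply ContinuousOn.mul
          · apply ContinuousOn.div
            · exact (continuous_const.mul (Real.continuous_sin.pow 2)).continuousOn
            · exact (Real.continuous_cos.comp (continuous_const.sub continuous_id)).continuousOn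
            · intro x hx; exact ne_of_gt (hcosd x (hsub hx))
          · apply hψc.comp
            · exact ((hτcont.sub continuousOn_const).sup continuousOn_const)
            · intro x hx
              exact mem_Ici.mpr (le_max_right _ _)
        · exact (continuousOn_const.sub hτcont).pow 2
        · intro x hx
          have h1 : 0 < 1 - τ x := by linarith [(hτ x (hsub hx)).1.2]
          exact pow_ne_zero 2 (ne_of_gt h1)
  -- sign at the endpoints
  have hFφ₀ : F φ₀ ≤ 0 := by
    have hmem : φ₀ ∈ Icc φ₀ m := ⟨le_refl _, hφ₀m⟩
    have hcorr : 0 ≤ (Real.cos θ * Real.sin φ₀ ^ 2 / Real.cos (θ - φ₀)) *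
        ψ (max (τ φ₀ - ac) 0) / (1 - τ φ₀) ^ 2 := by
      have h1 : 0 ≤ Real.cos θ := le_of_lt (Real.cos_pos_of_mem_Ioo ⟨by linarith, hθ2⟩)
      have h2 : 0 < Real.cos (θ - φ₀) := hcosd φ₀ ⟨hφ₀0, hφ₀m⟩
      have h3 : 0 ≤ ψ (max (τ φ₀ - ac) 0) := hψnn _ (mem_Ici.mpr (le_max_right _ _))
      positivity
    simp only [hF, muGc]
    rw [h₀]
    linarith
  have hFm : 0 ≤ F m := by simp only [hF]; linarith
  -- intermediate value theorem
  have hivt := intermediate_value_Icc hφ₀m hFcont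
  have h0mem : (0 : ℝ) ∈ Icc (F φ₀) (F m) := ⟨hFφ₀, hFm⟩
  obtain ⟨φ, hφmem, hφeq⟩ := hivt h0mem
  refine ⟨φ, hφmem, ?_⟩
  have : μL φ - Real.tan (θ - φ) * μD φ - muGc θ ψ ac τ φ = 0 := hφeq
  linarith
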